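/- For every non-negative integer n, the dimension over Z/2Z of the vector space DST(n) of dihedrally symmetric binary Steinhaus triangles of size n equals ⌊(n+3)/6⌋ + δ_{1,(n mod 6)}. -/

import Mathlib

open Finset

namespace Steinhaus

/-- Extended binomial coefficient `C(a,b)` for integers `a`, `b`:
`C(a,0) = 1`, `C(0,b) = 0` for `b > 0`, Pascal's rule everywhere; in particular
`C(a,b) = 0` for `b < 0` and `C(a,b) = (-1)^b C(b-a-1,b)` for `a < 0 ≤ b`. -/
def ibinom (a b : ℤ) : ℤ :=
  if b < 0 then 0
  else if 0 ≤ a then (a.toNat.choose b.toNat : ℤ)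
  else (-1) ^ b.toNat * ((b - a - 1).toNat.choose b.toNat : ℤ)

/-- `(i,j)` is an index of the triangle of size `n`, i.e. `1 ≤ i ≤ j ≤ n`. -/
def InTri (n i j : ℕ) : Prop := 1 ≤ i ∧ i ≤ j ∧ j ≤ n

instance (n i j : ℕ) : Decidable (InTri n i j) :=
  inferInstanceAs (Decidable (1 ≤ i ∧ i ≤ j ∧ j ≤ n))

/-- The `ZMod 2`-vector space of binary Steinhaus triangles of size `n`,
realized as functions `ℕ → ℕ → ZMod 2` vanishing outside the triangle
`{(i,j) | 1 ≤ i ≤ j ≤ n}` and satisfying the local rule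
`a i j = a (i-1) (j-1) + a (i-1) j` inside it. -/
def ST (n : ℕ) : Submodule (ZMod 2) (ℕ → ℕ → ZMod 2) where
  carrier := {a | (∀ i j, ¬ InTri n i j → a i j = 0) ∧
    ∀ i j, 2 ≤ i → i ≤ j → j ≤ n → a i j = a (i - 1) (j - 1) + a (i - 1) j}
  add_mem' := by
    rintro a b ⟨ha0, ha1⟩ ⟨hb0, hb1⟩
    refine ⟨fun i j h => ?_, fun i j h2 hij hjn => ?_⟩
    · simp only [Pi.add_apply, ha0 i j h, hb0 i j h, add_zero]
    · simp only [Pi.add_apply, ha1 i j h2 hij hjn, hb1 i j h2 hij hjn]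
      ring
  zero_mem' := ⟨fun _ _ _ => rfl, fun _ _ _ _ _ => by simp⟩
  smul_mem' := by
    rintro c a ⟨ha0, ha1⟩
    refine ⟨fun i j h => ?_, fun i j h2 hij hjn => ?_⟩
    · simp only [Pi.smul_apply, ha0 i j h, smul_zero]
    · simp only [Pi.smul_apply, ha1 i j h2 hij hjn, smul_add]

/-- The first row of the triangle `a` (of size `n`) is the sequence `S`;
equivalently, `a = ∇S`. -/
def FirstRow (n : ℕ) (a : ℕ → ℕ → ZMod 2) (S : ℕ → ZMod 2) : Prop :=
  ∀ j, 1 ≤ j → j ≤ n → a 1 j = S j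

/-- The rotation `r` by 120 degrees: `r(a)_{i,j} = a_{j-i+1, n-i+1}`. -/
def rot (n : ℕ) (a : ℕ → ℕ → ZMod 2) : ℕ → ℕ → ZMod 2 :=
  fun i j => if InTri n i j then a (j - i + 1) (n - i + 1) else 0

/-- The horizontal reflection `h`: `h(a)_{i,j} = a_{i, n-j+i}`. -/
def hrefl (n : ℕ) (a : ℕ → ℕ → ZMod 2) : ℕ → ℕ → ZMod 2 :=
  fun i j => if InTri n i j then a i (n - j + i) else 0

lemma rot_add (n : ℕ) (a b : ℕ → ℕ → ZMod 2) :
    rot n (a + b) = rot n a + rot n b := by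
  funext i j
  simp only [rot, Pi.add_apply]
  split_ifs <;> simp

lemma rot_smul (n : ℕ) (c : ZMod 2) (a : ℕ → ℕ → ZMod 2) :
    rot n (c • a) = c • rot n a := by
  funext i j
  simp only [rot, Pi.smul_apply]
  split_ifs <;> simp

lemma hrefl_add (n : ℕ) (a b : ℕ → ℕ → ZMod 2) :
    hrefl n (a + b) = hrefl n a + hrefl n b := by
  funext i j
  simp only [hrefl, Pi.add_apply]
  split_ifs <;> simp

lemma hrefl_smul (n : ℕ) (c : ZMod 2) (a : ℕ → ℕ → ZMod 2) :
    hrefl n (c • a) = c • hrefl n a := by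
  funext i j
  simp only [hrefl, Pi.smul_apply]
  split_ifs <;> simp

/-- The linear map `ρ = r² + r + id`. -/
def rho (n : ℕ) (a : ℕ → ℕ → ZMod 2) : ℕ → ℕ → ZMod 2 :=
  rot n (rot n a) + rot n a + a

/-- The subspace of rotationally symmetric Steinhaus triangles (fixed by `r`). -/
def RST (n : ℕ) : Submodule (ZMod 2) (ℕ → ℕ → ZMod 2) where
  carrier := {a | a ∈ ST n ∧ rot n a = a}
  add_mem' := by
    rintro a b ⟨ha, ha'⟩ ⟨hb, hb'⟩
    exact ⟨add_mem ha hb, by rw [rot_add, ha', hb']⟩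
  zero_mem' := ⟨zero_mem _, by funext i j; simp [rot]⟩
  smul_mem' := by
    rintro c a ⟨ha, ha'⟩
    exact ⟨Submodule.smul_mem _ c ha, by rw [rot_smul, ha']⟩

/-- The subspace of horizontally symmetric Steinhaus triangles (fixed by `h`). -/
def HST (n : ℕ) : Submodule (ZMod 2) (ℕ → ℕ → ZMod 2) where
  carrier := {a | a ∈ ST n ∧ hrefl n a = a}
  add_mem' := by
    rintro a b ⟨ha, ha'⟩ ⟨hb, hb'⟩
    exact ⟨add_mem ha hb, by rw [hrefl_add, ha', hb']⟩
  zero_mem' := ⟨zero_mem _, by funext i j; simp [hrefl]⟩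
  smul_mem' := by
    rintro c a ⟨ha, ha'⟩
    exact ⟨Submodule.smul_mem _ c ha, by rw [hrefl_smul, ha']⟩

/-- The subspace of dihedrally symmetric Steinhaus triangles (fixed by `r` and `h`). -/
def DST (n : ℕ) : Submodule (ZMod 2) (ℕ → ℕ → ZMod 2) where
  carrier := {a | a ∈ ST n ∧ rot n a = a ∧ hrefl n a = a}
  add_mem' := by
    rintro a b ⟨ha, ha', ha''⟩ ⟨hb, hb', hb''⟩
    exact ⟨add_mem ha hb, by rw [rot_add, ha', hb'], by rw [hrefl_add, ha'', hb'']⟩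
  zero_mem' := ⟨zero_mem _, by funext i j; simp [rot], by funext i j; simp [hrefl]⟩
  smul_mem' := by
    rintro c a ⟨ha, ha', ha''⟩
    exact ⟨Submodule.smul_mem _ c ha, by rw [rot_smul, ha'],
      by rw [hrefl_smul, ha'']⟩

/-- `σ₂`: the sum of the first `n` terms of a sequence over `ZMod 2`. -/
def seqSum (n : ℕ) (S : ℕ → ZMod 2) : ZMod 2 := ∑ j ∈ Finset.Icc 1 n, S j

/-- The subspace `DST₀(n)` of dihedrally symmetric Steinhaus triangles whose
first row has zero sum. -/
def DST0 (n : ℕ) : Submodule (ZMod 2) (ℕ → ℕ → ZMod 2) where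
  carrier := {a | a ∈ DST n ∧ seqSum n (a 1) = 0}
  add_mem' := by
    rintro a b ⟨ha, ha'⟩ ⟨hb, hb'⟩
    refine ⟨add_mem ha hb, ?_⟩
    have h : seqSum n ((a + b) 1) = seqSum n (a 1) + seqSum n (b 1) := by
      simp [seqSum, Finset.sum_add_distrib]
    rw [h, ha', hb', add_zero]
  zero_mem' := ⟨zero_mem _, by simp [seqSum]⟩
  smul_mem' := by
    rintro c a ⟨ha, ha'⟩
    refine ⟨Submodule.smul_mem _ c ha, ?_⟩
    have h : seqSum n ((c • a) 1) = c • seqSum n (a 1) := by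
      simp [seqSum, smul_eq_mul, Finset.mul_sum]
    rw [h, ha', smul_zero]

/-- The derived sequence `∂S`. -/
def der (S : ℕ → ZMod 2) : ℕ → ZMod 2 := fun j => S j + S (j + 1)

/-- The antiderived sequence `∫_{i,x} S`, whose `j`-th term is
`x + Σ_{k=1}^{i-1} S k + Σ_{k=1}^{j-1} S k`. -/
def antider (i : ℕ) (x : ZMod 2) (S : ℕ → ZMod 2) : ℕ → ZMod 2 :=
  fun j => x + (∑ k ∈ Finset.Ico 1 i, S k) + (∑ k ∈ Finset.Ico 1 j, S k)

/-- A sequence of length `n` is symmetric. -/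
def SymmSeq (n : ℕ) (S : ℕ → ZMod 2) : Prop :=
  ∀ j, 1 ≤ j → j ≤ n → S (n - j + 1) = S j

/-- The binomial sequence `bs(k,l)` whose `j`-th term is `C(l+j-1, k) mod 2`. -/
def bseq (k l : ℤ) : ℕ → ZMod 2 := fun j => ((ibinom (l + (j : ℤ) - 1) k : ℤ) : ZMod 2)

/-- The map `H : ST(n) → ST(n-3)` removing the first row and the two sides. -/
def Hmap (n : ℕ) (a : ℕ → ℕ → ZMod 2) : ℕ → ℕ → ZMod 2 :=
  fun i j => if InTri (n - 3) i j then a (1 + i) (2 + j) else 0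

/-- The projection `π_G` of a subspace `V` of triangles onto coordinates in `G`. -/
def proj (V : Submodule (ZMod 2) (ℕ → ℕ → ZMod 2)) (G : Set (ℕ × ℕ)) :
    V →ₗ[ZMod 2] (G → ZMod 2) where
  toFun a := fun p => (a : ℕ → ℕ → ZMod 2) p.1.1 p.1.2
  map_add' := fun _ _ => rfl
  map_smul' := fun _ _ => rfl

/-- `G` is a generating index set of the subspace `V` of `ST(n)`:
`G` consists of triangle indices and `π_G : V → (ZMod 2)^G` is an isomorphism. -/
def IsGenIndexSet (n : ℕ) (V : Submodule (ZMod 2) (ℕ → ℕ → ZMod 2))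
    (G : Set (ℕ × ℕ)) : Prop :=
  (∀ p ∈ G, InTri n p.1 p.2) ∧ Function.Bijective (proj V G)

end Steinhaus

open Finset
namespace Steinhaus

lemma z2 (a : ZMod 2) : a + a = 0 := CharTwo.add_self_eq_zero a

lemma z2eq {x y : ZMod 2} (h : x + y = 0) : x = y := by
  have h2 := z2 y
  calc x = x + (y + y) := by rw [h2]; ring
  _ = (x + y) + y := by ring
  _ = y := by rw [h]; ring

lemma ST_vanish {n : ℕ} {a : ℕ → ℕ → ZMod 2} (ha : a ∈ ST n) {i j : ℕ}
    (h : ¬ InTri n i j) : a i j = 0 := ha.1 i j h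

lemma ST_rule {n : ℕ} {a : ℕ → ℕ → ZMod 2} (ha : a ∈ ST n) {i j : ℕ}
    (h2 : 2 ≤ i) (hij : i ≤ j) (hjn : j ≤ n) :
    a i j = a (i-1) (j-1) + a (i-1) j := ha.2 i j h2 hij hjn

/-- A Steinhaus triangle with zero first row is zero. -/
lemma ST_eq_zero {n : ℕ} {a : ℕ → ℕ → ZMod 2} (ha : a ∈ ST n)
    (h : ∀ j, a 1 j = 0) : a = 0 := by
  have H : ∀ i j, a i j = 0 := by
    intro i
    induction i with
    | zero => intro j; exact ha.1 0 j (by simp [InTri])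
    | succ i ih =>
      intro j
      rcases Nat.eq_zero_or_pos i with hi | hi
      · subst hi; exact h j
      · by_cases hin : InTri n (i+1) j
        · rw [ST_rule ha (by omega) hin.2.1 hin.2.2]
          simp only [Nat.add_sub_cancel, ih]
          simp
        · exact ha.1 _ _ hin
  funext i j; exact H i j

lemma ST_ext {n : ℕ} {a b : ℕ → ℕ → ZMod 2} (ha : a ∈ ST n) (hb : b ∈ ST n)
    (h : ∀ j, 1 ≤ j → j ≤ n → a 1 j = b 1 j) : a = b := by
  have hab : a + b ∈ ST n := add_mem ha hb
  have h0 : a + b = 0 := by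
    apply ST_eq_zero hab
    intro j
    by_cases hj : InTri n 1 j
    · show a 1 j + b 1 j = 0
      rw [h j hj.2.1 hj.2.2]; exact z2 _
    · show a 1 j + b 1 j = 0
      rw [ST_vanish ha hj, ST_vanish hb hj, add_zero]
  funext i j
  have := congrFun (congrFun h0 i) j
  have h2 : a i j + b i j = 0 := this
  have := z2 (b i j)
  calc a i j = a i j + (b i j + b i j) := by rw [z2]; ring
  _ = (a i j + b i j) + b i j := by ring
  _ = b i j := by rw [h2]; ring

lemma rot_mem_ST {n : ℕ} {a : ℕ → ℕ → ZMod 2} (ha : a ∈ ST n) : rot n a ∈ ST n := by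
  constructor
  · intro i j h; simp [rot, h]
  · intro i j h2 hij hjn
    have hin : InTri n i j := ⟨by omega, hij, hjn⟩
    have hin1 : InTri n (i-1) (j-1) := by constructor <;> omega
    have hin2 : InTri n (i-1) j := by constructor <;> omega
    simp only [rot, if_pos hin, if_pos hin1, if_pos hin2]
    have e1 : j - 1 - (i-1) + 1 = j - i + 1 := by omega
    have e2 : j - (i-1) + 1 = j - i + 2 := by omega
    have e3 : n - (i-1) + 1 = n - i + 2 := by omega
    rw [e1, e2, e3]
    have hr := ST_rule ha (i := j - i + 2) (j := n - i + 2) (by omega) (by omega) (by omega)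
    have f1 : j - i + 2 - 1 = j - i + 1 := by omega
    have f2 : n - i + 2 - 1 = n - i + 1 := by omega
    rw [f1, f2] at hr
    rw [hr]
    have := z2 (a (j-i+1) (n-i+2))
    calc a (j-i+1) (n-i+1) = a (j-i+1) (n-i+1) + (a (j-i+1) (n-i+2) + a (j-i+1) (n-i+2)) := by
          rw [this]; ring
    _ = a (j-i+1) (n-i+2) + (a (j-i+1) (n-i+1) + a (j-i+1) (n-i+2)) := by ring

lemma hrefl_mem_ST {n : ℕ} {a : ℕ → ℕ → ZMod 2} (ha : a ∈ ST n) : hrefl n a ∈ ST n := by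
  constructor
  · intro i j h; simp [hrefl, h]
  · intro i j h2 hij hjn
    have hin : InTri n i j := ⟨by omega, hij, hjn⟩
    have hin1 : InTri n (i-1) (j-1) := by constructor <;> omega
    have hin2 : InTri n (i-1) j := by constructor <;> omega
    simp only [hrefl, if_pos hin, if_pos hin1, if_pos hin2]
    have e1 : n - (j-1) + (i-1) = n - j + i := by omega
    have e2 : n - j + (i-1) = n - j + i - 1 := by omega
    rw [e1, e2]
    have hr := ST_rule ha (i := i) (j := n - j + i) h2 (by omega) (by omega)
    rw [hr]
    have e3 : n - j + i - 1 = (n - j + i) - 1 := by omega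
    ring

/-- first-row characterization of rotational symmetry -/
lemma rot_eq_iff {n : ℕ} {a : ℕ → ℕ → ZMod 2} (ha : a ∈ ST n) :
    rot n a = a ↔ ∀ j, 1 ≤ j → j ≤ n → a j n = a 1 j := by
  constructor
  · intro h j h1 hn
    have := congrFun (congrFun h 1) j
    simp only [rot, if_pos (show InTri n 1 j from ⟨le_refl _, h1, hn⟩)] at this
    have e1 : j - 1 + 1 = j := by omega
    have e2 : n - 1 + 1 = n := by omega
    rw [e1, e2] at this
    exact this
  · intro h
    apply ST_ext (rot_mem_ST ha) ha
    intro j h1 hn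
    simp only [rot, if_pos (show InTri n 1 j from ⟨le_refl _, h1, hn⟩)]
    have e1 : j - 1 + 1 = j := by omega
    have e2 : n - 1 + 1 = n := by omega
    rw [e1, e2]
    exact h j h1 hn

end Steinhaus

namespace Steinhaus

lemma hrefl_eq_iff {n : ℕ} {a : ℕ → ℕ → ZMod 2} (ha : a ∈ ST n) :
    hrefl n a = a ↔ ∀ j, 1 ≤ j → j ≤ n → a 1 (n - j + 1) = a 1 j := by
  constructor
  · intro h j h1 hn
    have := congrFun (congrFun h 1) j
    simp only [hrefl, if_pos (show InTri n 1 j from ⟨le_refl _, h1, hn⟩)] at this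
    exact this
  · intro h
    apply ST_ext (hrefl_mem_ST ha) ha
    intro j h1 hn
    simp only [hrefl, if_pos (show InTri n 1 j from ⟨le_refl _, h1, hn⟩)]
    exact h j h1 hn

/-- symmetry of first row of a triangle fixed by hrefl, stated for sequences. -/
lemma row_symm {n : ℕ} {a : ℕ → ℕ → ZMod 2} (ha : a ∈ ST n) (hh : hrefl n a = a)
    {x y : ℕ} (hxy : x + y = n + 1) : a 1 x = a 1 y := by
  by_cases hx : 1 ≤ x ∧ x ≤ n
  · have hy : y = n - x + 1 := by omega
    subst hy
    exact ((hrefl_eq_iff ha).1 hh x hx.1 hx.2).symm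
  · have hx0 : a 1 x = 0 := ST_vanish ha (by simp [InTri]; omega)
    have hy0 : a 1 y = 0 := ST_vanish ha (by simp [InTri]; omega)
    rw [hx0, hy0]

/-- right column of a rot-fixed triangle -/
lemma rot_col {n : ℕ} {a : ℕ → ℕ → ZMod 2} (hr : rot n a = a)
    {j : ℕ} (h1 : 1 ≤ j) (hn : j ≤ n) : a j n = a 1 j := by
  have := congrFun (congrFun hr 1) j
  simp only [rot, if_pos (show InTri n 1 j from ⟨le_refl _, h1, hn⟩)] at this
  have e1 : j - 1 + 1 = j := by omega
  have e2 : n - 1 + 1 = n := by omega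
  rw [e1, e2] at this
  exact this

/-- diagonal of a triangle in DST -/
lemma dst_diag {n : ℕ} {a : ℕ → ℕ → ZMod 2} (ha : a ∈ ST n) (hr : rot n a = a)
    (hh : hrefl n a = a) {j : ℕ} (h1 : 1 ≤ j) (hn : j ≤ n) : a j j = a 1 j := by
  have := congrFun (congrFun hr j) j
  simp only [rot, if_pos (show InTri n j j from ⟨h1, le_refl _, hn⟩)] at this
  have e1 : j - j + 1 = 1 := by omega
  rw [e1] at this
  -- this : a 1 (n - j + 1) = a j j
  rw [← this]
  exact row_symm ha hh (by omega)

/-- The triangle generated by a first row. -/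
def gen (n : ℕ) (S : ℕ → ZMod 2) : ℕ → ℕ → ZMod 2
  | 0 => fun _ => 0
  | 1 => fun j => if InTri n 1 j then S j else 0
  | (i+2) => fun j => if InTri n (i+2) j then gen n S (i+1) (j-1) + gen n S (i+1) j else 0

lemma gen_mem_ST (n : ℕ) (S : ℕ → ZMod 2) : gen n S ∈ ST n := by
  constructor
  · intro i j h
    match i with
    | 0 => rfl
    | 1 => simp [gen, h]
    | (i+2) => simp [gen, h]
  · intro i j h2 hij hjn
    match i with
    | (i+2) =>
      simp only [gen, if_pos (show InTri n (i+2) j from ⟨by omega, hij, hjn⟩)]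
      rfl

lemma gen_row1 (n : ℕ) (S : ℕ → ZMod 2) {j : ℕ} (h1 : 1 ≤ j) (hn : j ≤ n) :
    gen n S 1 j = S j := by
  simp [gen, InTri, h1, hn]

end Steinhaus

namespace Steinhaus

lemma sum_Icc_bot {a b : ℕ} (h : a ≤ b) (f : ℕ → ZMod 2) :
    ∑ x ∈ Icc a b, f x = f a + ∑ x ∈ Icc (a+1) b, f x := by
  have e : Icc a b = insert a (Icc (a+1) b) := by ext x; simp; omega
  rw [e, Finset.sum_insert (by simp)]

lemma sum_Icc_top {a b : ℕ} (h : a ≤ b) (hb : 1 ≤ b) (f : ℕ → ZMod 2) :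
    ∑ x ∈ Icc a b, f x = (∑ x ∈ Icc a (b-1), f x) + f b := by
  have e : Icc a b = insert b (Icc a (b-1)) := by ext x; simp; omega
  rw [e, Finset.sum_insert (by simp; omega)]
  ring

lemma sum_Icc_split {p q : ℕ} (h : p ≤ q) (f : ℕ → ZMod 2) :
    ∑ x ∈ Icc 1 q, f x = (∑ x ∈ Icc 1 p, f x) + ∑ x ∈ Icc (p+1) q, f x := by
  have e : Icc 1 q = Icc 1 p ∪ Icc (p+1) q := by ext x; simp; omega
  rw [e, Finset.sum_union (by rw [Finset.disjoint_left]; intro x hx hx'; simp at hx hx'; omega)]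

lemma telescope (m : ℕ) (g : ℕ → ZMod 2) :
    ∑ j ∈ Icc 1 m, (g j + g (j+1)) = g 1 + g (m+1) := by
  induction m with
  | zero => simp [z2]
  | succ m ih =>
    rw [sum_Icc_top (by omega) (by omega)]
    simp only [Nat.add_sub_cancel, ih]
    have := z2 (g (m+1))
    calc g 1 + g (m+1) + (g (m+1) + g (m+1+1)) = g 1 + g (m+2) + (g (m+1) + g (m+1)) := by ring
    _ = g 1 + g (m+2) := by rw [this]; ring

/-- sum over a symmetric interval vanishes (with center hypothesis). -/
lemma SIL_aux {m : ℕ} {S : ℕ → ZMod 2} (hsym : ∀ x y, x + y = m + 1 → S x = S y)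
    (hc : ∀ c, c + c = m + 1 → S c = 0) :
    ∀ d a b, a + b = m + 1 → b + 1 ≤ a + d → ∑ x ∈ Icc a b, S x = 0 := by
  intro d
  induction d with
  | zero => intro a b hab hd; rw [Finset.Icc_eq_empty (by omega)]; simp
  | succ d ih =>
    intro a b hab hd
    rcases lt_trichotomy a b with h | h | h
    · have hb1 : 1 ≤ b := by omega
      rw [sum_Icc_bot (by omega), sum_Icc_top (by omega) (by omega)]
      have e : a + 1 + (b - 1) = m + 1 := by omega
      rw [ih (a+1) (b-1) e (by omega)]
      have hs : S a = S b := hsym a b hab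
      rw [hs]
      have := z2 (S b)
      calc S b + (0 + S b) = S b + S b := by ring
      _ = 0 := this
    · subst h
      rw [Finset.Icc_self, Finset.sum_singleton]
      exact hc a hab
    · rw [Finset.Icc_eq_empty (by omega)]; simp

lemma SIL {m : ℕ} {S : ℕ → ZMod 2} (hsym : ∀ x y, x + y = m + 1 → S x = S y)
    (hsig : ∑ x ∈ Icc 1 m, S x = 0) :
    ∀ a b, a + b = m + 1 → ∑ x ∈ Icc a b, S x = 0 := by
  rcases Nat.even_or_odd m with he | ho
  · intro a b hab
    obtain ⟨t, ht⟩ := he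
    exact SIL_aux hsym (fun c hc => absurd hc (by omega)) (b+2) a b hab (by omega)
  · -- m odd: first get S at the center
    obtain ⟨k, hk⟩ := ho
    set c := k + 1 with hcdef
    have hcc : c + c = m + 1 := by omega
    set S' : ℕ → ZMod 2 := fun x => if x = c then 0 else S x with hS'
    have hsym' : ∀ x y, x + y = m + 1 → S' x = S' y := by
      intro x y hxy
      simp only [hS']
      by_cases hx : x = c
      · have : y = c := by omega
        simp [hx, this]
      · have hy : y ≠ c := by omega
        simp only [if_neg hx, if_neg hy]
        exact hsym x y hxy
    have hsum' : ∑ x ∈ Icc 1 m, S' x = 0 :=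
      SIL_aux hsym' (fun e he => by
        have hec : e = c := by omega
        simp [hS', hec]) (m+2) 1 m (by omega) (by omega)
    have hdecomp : ∑ x ∈ Icc 1 m, S x
        = (∑ x ∈ Icc 1 m, S' x) + ∑ x ∈ Icc 1 m, (if x = c then S c else 0) := by
      rw [← Finset.sum_add_distrib]
      apply Finset.sum_congr rfl
      intro x hx
      by_cases hxc : x = c <;> simp [hS', hxc]
    have hind : ∑ x ∈ Icc 1 m, (if x = c then S c else 0) = S c := by
      rw [Finset.sum_ite_eq' (Icc 1 m) c (fun _ => S c)]
      simp only [Finset.mem_Icc, if_pos (show 1 ≤ c ∧ c ≤ m by omega)]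
    have hSc : S c = 0 := by
      rw [hdecomp, hsum', hind, zero_add] at hsig
      exact hsig
    intro a b hab
    exact SIL_aux hsym (fun e he => by
      have hec : e = c := by omega
      rw [hec, hSc]) (b+2) a b hab (by omega)

/-- partial sums at symmetric indices agree. -/
lemma SYM {m : ℕ} {S : ℕ → ZMod 2} (hsym : ∀ x y, x + y = m + 1 → S x = S y)
    (hsig : ∑ x ∈ Icc 1 m, S x = 0) {p q : ℕ} (hpq : p + q = m) :
    ∑ x ∈ Icc 1 p, S x = ∑ x ∈ Icc 1 q, S x := by
  rcases le_total p q with h | h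
  · rw [sum_Icc_split h S, SIL hsym hsig (p+1) q (by omega)]; ring
  · rw [sum_Icc_split h S, SIL hsym hsig (q+1) p (by omega)]; ring

end Steinhaus

namespace Steinhaus

lemma mem_DST {n : ℕ} {a : ℕ → ℕ → ZMod 2} :
    a ∈ DST n ↔ a ∈ ST n ∧ rot n a = a ∧ hrefl n a = a := Iff.rfl

lemma Hmap_mem_ST {n : ℕ} {a : ℕ → ℕ → ZMod 2} (ha : a ∈ ST n) :
    Hmap n a ∈ ST (n-3) := by
  constructor
  · intro i j h; simp [Hmap, h]
  · intro i j h2 hij hjn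
    have hin : InTri (n-3) i j := ⟨by omega, hij, hjn⟩
    have hin1 : InTri (n-3) (i-1) (j-1) := by constructor <;> omega
    have hin2 : InTri (n-3) (i-1) j := by constructor <;> omega
    have hn : 3 ≤ n := by
      by_contra h
      have : n - 3 = 0 := by omega
      omega
    simp only [Hmap, if_pos hin, if_pos hin1, if_pos hin2]
    have hr := ST_rule ha (i := 1+i) (j := 2+j) (by omega) (by omega) (by omega)
    have e1 : 1 + i - 1 = 1 + (i-1) := by omega
    have e2 : 2 + j - 1 = 2 + (j-1) := by omega
    have e3 : 2 + (j-1) = 1 + ((j-1)+1) := by omega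
    rw [e1, e2] at hr
    rw [hr]

lemma Hmap_row {n : ℕ} {a : ℕ → ℕ → ZMod 2} {j : ℕ} (h1 : 1 ≤ j) (hj : j ≤ n - 3) :
    Hmap n a 1 j = a 2 (2 + j) := by
  simp [Hmap, InTri, h1, hj]

/-- H maps DST into DST. -/
lemma Hmap_mem_DST {n : ℕ} {a : ℕ → ℕ → ZMod 2} (ha : a ∈ DST n) :
    Hmap n a ∈ DST (n-3) := by
  obtain ⟨hst, hr, hh⟩ := ha
  have hst' := Hmap_mem_ST hst
  refine ⟨hst', ?_, ?_⟩
  · rw [rot_eq_iff hst']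
    intro j h1 hj
    have hn : 3 ≤ n := by omega
    -- Hmap a j (n-3) = a (1+j) (n-1), and rot a at (2, 2+j) gives a 2 (2+j) = a (j+1) (n-1)
    have e : Hmap n a j (n-3) = a (1+j) (2+(n-3)) := by
      simp [Hmap, InTri, h1, hj]
    have e2 : 2 + (n-3) = n - 1 := by omega
    have hrot := congrFun (congrFun hr 2) (2+j)
    simp only [rot, if_pos (show InTri n 2 (2+j) from ⟨by omega, by omega, by omega⟩)] at hrot
    have e3 : 2 + j - 2 + 1 = 1 + j := by omega
    have e4 : n - 2 + 1 = n - 1 := by omega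
    rw [e3, e4] at hrot
    rw [e, e2, hrot, Hmap_row h1 hj]
  · rw [hrefl_eq_iff hst']
    intro j h1 hj
    have hn : 3 ≤ n := by omega
    rw [Hmap_row h1 hj, Hmap_row (by omega : 1 ≤ n - 3 - j + 1) (by omega)]
    have hhl := congrFun (congrFun hh 2) (2+j)
    simp only [hrefl, if_pos (show InTri n 2 (2+j) from ⟨by omega, by omega, by omega⟩)] at hhl
    have e : n - (2+j) + 2 = 2 + (n - 3 - j + 1) := by omega
    rw [e] at hhl
    exact hhl

/-- The first row of H(a) has zero sum, for a ∈ DST n. -/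
lemma Hmap_sigma {n : ℕ} {a : ℕ → ℕ → ZMod 2} (ha : a ∈ DST n) :
    ∑ k ∈ Icc 1 (n-3), Hmap n a 1 k = 0 := by
  obtain ⟨hst, hr, hh⟩ := ha
  by_cases hn : 3 ≤ n
  · have e : ∀ k ∈ Icc 1 (n-3), Hmap n a 1 k = a 1 (k+1) + a 1 (k+1+1) := by
      intro k hk
      simp only [Finset.mem_Icc] at hk
      rw [Hmap_row hk.1 hk.2, ST_rule hst (by omega) (by omega) (by omega)]
      have e1 : 2 - 1 = 1 := rfl
      have e2 : 2 + k - 1 = k + 1 := by omega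
      have e3 : 2 + k = k + 1 + 1 := by omega
      rw [e1, e2, e3]
    rw [Finset.sum_congr rfl e, telescope (n-3) (fun k => a 1 (k+1))]
    have := row_symm hst hh (x := 1+1) (y := n-3+1+1) (by omega)
    rw [← this]
    exact z2 _
  · have e : n - 3 = 0 := by omega
    rw [e]; simp

/-- The border triangle. -/
def Bt (n : ℕ) : ℕ → ℕ → ZMod 2 := fun i j =>
  if InTri n i j ∧ ((i = 1 ∧ 2 ≤ j ∧ j ≤ n-1) ∨ (2 ≤ i ∧ i ≤ n-1 ∧ (j = i ∨ j = n)))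
  then 1 else 0

lemma Bt_mem_ST (n : ℕ) : Bt n ∈ ST n := by
  constructor
  · intro i j h
    simp only [Bt]
    rw [if_neg]; tauto
  · intro i j h2 hij hjn
    simp only [Bt]
    split_ifs <;> simp only [InTri] at * <;> first | rfl | decide | (exfalso; omega) | (symm; decide)

lemma Bt_mem_DST {n : ℕ} (hn : 3 ≤ n) : Bt n ∈ DST n := by
  refine ⟨Bt_mem_ST n, ?_, ?_⟩
  · rw [rot_eq_iff (Bt_mem_ST n)]
    intro j h1 hj
    simp only [Bt, InTri]
    split_ifs <;>
      first
      | rfl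
      | (exfalso
         simp only [true_and, and_true, true_or, or_true, le_refl] at *
         omega)
  · rw [hrefl_eq_iff (Bt_mem_ST n)]
    intro j h1 hj
    simp only [Bt, InTri]
    split_ifs <;>
      first
      | rfl
      | (exfalso
         simp only [true_and, and_true, true_or, or_true, le_refl] at *
         omega)

lemma Bt_one_two {n : ℕ} (hn : 3 ≤ n) : Bt n 1 2 = 1 := by
  simp only [Bt]
  rw [if_pos (⟨(show InTri n 1 2 from ⟨by omega, by omega, by omega⟩),
    Or.inl ⟨by trivial, by omega, by omega⟩⟩)]

lemma Bt_ne_zero {n : ℕ} (hn : 3 ≤ n) : Bt n ≠ 0 := by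
  intro h
  have h2 := congrFun (congrFun h 1) 2
  rw [Bt_one_two hn] at h2
  exact one_ne_zero h2

lemma Hmap_Bt {n : ℕ} : Hmap n (Bt n) = 0 := by
  funext i j
  simp only [Hmap, Pi.zero_apply]
  split_ifs with h
  · simp only [Bt]
    rw [if_neg]
    obtain ⟨h1, h2, h3⟩ := h
    have hn : 3 ≤ n := by omega
    simp only [InTri]
    omega
  · rfl

/-- kernel characterization -/
lemma ker_Hmap {n : ℕ} (hn : 3 ≤ n) {a : ℕ → ℕ → ZMod 2} (ha : a ∈ DST n)
    (h0 : Hmap n a = 0) : a = (a 1 2) • Bt n := by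
  obtain ⟨hst, hr, hh⟩ := ha
  -- row 2 entries vanish in the interior
  have hrow2 : ∀ j, 3 ≤ j → j ≤ n - 1 → a 2 j = 0 := by
    intro j h3 hj
    have := congrFun (congrFun h0 1) (j - 2)
    rw [Hmap_row (by omega) (by omega)] at this
    have e : 2 + (j-2) = j := by omega
    rw [e] at this
    exact this
  -- first row constant on [2, n-1]
  have hconst : ∀ j, 2 ≤ j → j ≤ n - 1 → a 1 j = a 1 2 := by
    intro j
    induction j with
    | zero => omega
    | succ j ih =>
      intro h2 hj
      rcases Nat.lt_or_ge j 2 with h | h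
      · have : j + 1 = 2 := by omega
        rw [this]
      · have hz := hrow2 (j+1) (by omega) hj
        rw [ST_rule hst (by omega) (by omega) (by omega)] at hz
        simp only [Nat.add_sub_cancel] at hz
        have e1 : (2:ℕ) - 1 = 1 := rfl
        rw [e1] at hz
        rw [← z2eq hz]
        exact ih h (by omega)
  -- a 1 n = 0
  have h1n : a 1 n = 0 := by
    have hcol := rot_col hr (j := 2) (by omega) (by omega)
    rw [ST_rule hst (j := n) (by omega) (by omega) (by omega)] at hcol
    have e1 : (2:ℕ) - 1 = 1 := rfl
    rw [e1] at hcol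
    have h1 : a 1 (n-1) = a 1 2 := hconst (n-1) (by omega) (by omega)
    rw [h1] at hcol
    -- hcol : a 1 2 = a 1 2 + a 1 n
    have h2 := z2 (a 1 2)
    calc a 1 n = (a 1 2 + a 1 2) + a 1 n := by rw [h2]; ring
    _ = a 1 2 + (a 1 2 + a 1 n) := by ring
    _ = a 1 2 + a 1 2 := by rw [hcol]
    _ = 0 := h2
  have h11 : a 1 1 = 0 := by
    rw [row_symm hst hh (x := 1) (y := n) (by omega)]
    exact h1n
  apply ST_ext hst (Submodule.smul_mem _ _ (Bt_mem_ST n) : _ ∈ ST n)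
  intro j hj1 hjn
  show a 1 j = (a 1 2) * Bt n 1 j
  simp only [Bt, InTri]
  split_ifs with hc
  · simp only [true_and, and_true, le_refl, true_or, or_true] at hc
    rw [mul_one]
    exact hconst j (by omega) (by omega)
  · simp only [true_and, and_true, le_refl, true_or, or_true] at hc
    rw [mul_zero]
    have : j = 1 ∨ j = n := by omega
    rcases this with rfl | h'
    · exact h11
    · rw [h']; exact h1n

end Steinhaus

namespace Steinhaus

lemma Hmap_entry {n : ℕ} (a : ℕ → ℕ → ZMod 2) {i j : ℕ} (h : InTri (n-3) i j) :
    Hmap n a i j = a (1+i) (2+j) := by simp [Hmap, h]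

lemma surj_aux {n : ℕ} (hn : 3 ≤ n) {b : ℕ → ℕ → ZMod 2} (hb : b ∈ DST (n-3))
    (hsig : ∑ k ∈ Icc 1 (n-3), b 1 k = 0) : ∃ a, a ∈ DST n ∧ Hmap n a = b := by
  obtain ⟨hbst, hbr, hbh⟩ := hb
  set m := n - 3 with hm
  set T : ℕ → ZMod 2 := fun k => b 1 k with hT
  have T_sym : ∀ x y, x + y = m + 1 → T x = T y := fun x y h => row_symm hbst hbh h
  have T_out : ∀ x, x = 0 ∨ m < x → T x = 0 := by
    intro x hx
    exact ST_vanish hbst (by simp [InTri]; omega)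
  set S : ℕ → ZMod 2 := fun j => if 2 ≤ j ∧ j ≤ n then ∑ k ∈ Icc 1 (j-2), T k else 0
    with hS
  set a := gen n S with ha
  have hast : a ∈ ST n := gen_mem_ST n S
  have harow : ∀ j, 1 ≤ j → j ≤ n → a 1 j = S j := fun j h1 h2 => gen_row1 n S h1 h2
  have hS1 : S 1 = 0 := by simp only [hS]; rw [if_neg (by omega)]
  have hS2 : S 2 = 0 := by
    simp only [hS]; rw [if_pos ⟨le_refl 2, by omega⟩]
    show ∑ k ∈ Icc 1 0, T k = 0
    simp
  have hSn1 : S (n-1) = 0 := by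
    simp only [hS]; rw [if_pos ⟨by omega, by omega⟩]
    have e : n - 1 - 2 = m := by omega
    rw [e]; exact hsig
  have hSn : S n = 0 := by
    simp only [hS]; rw [if_pos ⟨by omega, le_refl n⟩]
    rw [sum_Icc_top (show (1:ℕ) ≤ n - 2 by omega) (by omega)]
    have e : n - 2 - 1 = m := by omega
    rw [e, hsig, T_out (n-2) (by omega), add_zero]
  have hSrec : ∀ j, 3 ≤ j → j ≤ n → S j = S (j-1) + T (j-2) := by
    intro j h3 hj
    simp only [hS]
    rw [if_pos ⟨by omega, hj⟩, if_pos ⟨by omega, by omega⟩]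
    rw [sum_Icc_top (show (1:ℕ) ≤ j - 2 by omega) (by omega)]
    have e : j - 2 - 1 = j - 1 - 2 := by omega
    rw [e]
  have hsymS : ∀ j, 1 ≤ j → j ≤ n → S (n - j + 1) = S j := by
    intro j h1 hj
    rcases Nat.lt_or_ge j 2 with h | h
    · have : j = 1 := by omega
      subst this
      have e : n - 1 + 1 = n := by omega
      rw [e, hSn, hS1]
    · rcases Nat.lt_or_ge j n with h2 | h2
      · simp only [hS]
        rw [if_pos ⟨by omega, by omega⟩, if_pos ⟨by omega, hj⟩]
        exact SYM T_sym hsig (by omega)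
      · have hjn2 : j = n := by omega
        rw [hjn2]
        have e : n - n + 1 = 1 := by omega
        rw [e, hS1, hSn]
  have hrow2 : ∀ j, 1 ≤ j → j ≤ m → a 2 (2+j) = T j := by
    intro j h1 hj
    rw [ST_rule hast (by omega) (by omega) (by omega)]
    have e1 : (2:ℕ) - 1 = 1 := rfl
    have e2 : 2 + j - 1 = 1 + j := by omega
    rw [e1, e2, harow (1+j) (by omega) (by omega), harow (2+j) (by omega) (by omega)]
    rw [hSrec (2+j) (by omega) (by omega)]
    have e3 : 2 + j - 1 = 1 + j := by omega
    have e4 : 2 + j - 2 = j := by omega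
    rw [e3, e4, ← add_assoc, z2, zero_add]
  have hHa : Hmap n a = b := by
    apply ST_ext (Hmap_mem_ST hast) hbst
    intro j h1 hj
    rw [Hmap_row h1 hj, hrow2 j h1 hj]
  have hcol : ∀ j, 2 ≤ j → j ≤ n-1 → a j n = S j := by
    intro j hj2
    induction j, hj2 using Nat.le_induction with
    | base =>
      intro _
      rw [ST_rule hast (by omega) (by omega) (le_refl n)]
      have e1 : (2:ℕ) - 1 = 1 := rfl
      rw [e1, harow (n-1) (by omega) (by omega), harow n (by omega) (le_refl n)]
      rw [hSn1, hSn, hS2, add_zero]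
    | succ j hj ih =>
      intro hjn
      rw [ST_rule hast (by omega) (by omega) (le_refl n)]
      have e1 : j + 1 - 1 = j := by omega
      rw [e1]
      have hint : a j (n-1) = T (j-1) := by
        have h2 := congrFun (congrFun hHa (j-1)) m
        rw [Hmap_entry a ⟨by omega, by omega, le_refl m⟩] at h2
        have e2 : 1 + (j-1) = j := by omega
        have e3 : 2 + m = n - 1 := by omega
        rw [e2, e3] at h2
        rw [h2]
        exact rot_col hbr (by omega) (by omega)
      rw [hint, ih (by omega), hSrec (j+1) (by omega) (by omega)]
      have e5 : j + 1 - 2 = j - 1 := by omega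
      rw [e1, e5]
      ring
  have hdiag : ∀ j, 2 ≤ j → j ≤ n-1 → a j j = S j := by
    intro j hj2
    induction j, hj2 using Nat.le_induction with
    | base =>
      intro _
      rw [ST_rule hast (by omega) (by omega) (by omega)]
      have e1 : (2:ℕ) - 1 = 1 := rfl
      rw [e1, harow 1 (by omega) (by omega), harow 2 (by omega) (by omega)]
      rw [hS1, hS2, add_zero]
    | succ j hj ih =>
      intro hjn
      rw [ST_rule hast (by omega) (by omega) (by omega)]
      have e1 : j + 1 - 1 = j := by omega
      rw [e1]
      have hint : a j (j+1) = T (j-1) := by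
        have h2 := congrFun (congrFun hHa (j-1)) (j-1)
        rw [Hmap_entry a ⟨by omega, le_refl _, by omega⟩] at h2
        have e2 : 1 + (j-1) = j := by omega
        have e3 : 2 + (j-1) = j + 1 := by omega
        rw [e2, e3] at h2
        rw [h2]
        exact dst_diag hbst hbr hbh (by omega) (by omega)
      rw [hint, ih (by omega), hSrec (j+1) (by omega) (by omega)]
      have e5 : j + 1 - 2 = j - 1 := by omega
      rw [e1, e5]
  have hrot : rot n a = a := by
    rw [rot_eq_iff hast]
    intro j h1 hj
    rw [harow j h1 hj]
    rcases Nat.lt_or_ge j 2 with h | h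
    · have : j = 1 := by omega
      subst this
      rw [harow n (by omega) (le_refl n), hSn, hS1]
    · rcases Nat.lt_or_ge j n with h2 | h2
      · exact hcol j (by omega) (by omega)
      · have hjn2 : j = n := by omega
        rw [hjn2]
        rw [ST_rule hast (by omega) (le_refl n) (le_refl n)]
        rw [hcol (n-1) (by omega) (by omega), hdiag (n-1) (by omega) (by omega)]
        rw [hSn, z2]
  have hhr : hrefl n a = a := by
    rw [hrefl_eq_iff hast]
    intro j h1 hj
    rw [harow j h1 hj, harow (n-j+1) (by omega) (by omega)]
    exact hsymS j h1 hj
  exact ⟨a, ⟨hast, hrot, hhr⟩, hHa⟩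

end Steinhaus

namespace Steinhaus

/-- first-row projection -/
def frmap (k : ℕ) : (ST k) →ₗ[ZMod 2] (Fin (k+1) → ZMod 2) where
  toFun a := fun j => (a : ℕ → ℕ → ZMod 2) 1 j
  map_add' := fun _ _ => rfl
  map_smul' := fun _ _ => rfl

instance ST_fd (k : ℕ) : FiniteDimensional (ZMod 2) (ST k) := by
  apply FiniteDimensional.of_injective (frmap k)
  intro a b hab
  apply Subtype.ext
  have h0 : (a : ℕ → ℕ → ZMod 2) + b = 0 ∨ True := Or.inr trivial
  -- show a - b = 0 via first rows equal
  apply ST_ext a.2 b.2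
  intro j h1 hj
  have := congrFun hab ⟨j, by omega⟩
  exact this

lemma DST_le_ST (k : ℕ) : DST k ≤ ST k := fun _ h => h.1

instance DST_fd (k : ℕ) : FiniteDimensional (ZMod 2) (DST k) :=
  Submodule.finiteDimensional_of_le (DST_le_ST k)

/-- the sum-of-first-row functional on DST k -/
def sig (k : ℕ) : (DST k) →ₗ[ZMod 2] ZMod 2 where
  toFun a := ∑ j ∈ Icc 1 k, (a : ℕ → ℕ → ZMod 2) 1 j
  map_add' := by
    intro x y
    show ∑ j ∈ Icc 1 k, ((x : ℕ → ℕ → ZMod 2) 1 j + (y : ℕ → ℕ → ZMod 2) 1 j) = _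
    rw [Finset.sum_add_distrib]
  map_smul' := by
    intro c x
    show ∑ j ∈ Icc 1 k, c * (x : ℕ → ℕ → ZMod 2) 1 j = c * _
    rw [Finset.mul_sum]

lemma Hmap_add (n : ℕ) (a b : ℕ → ℕ → ZMod 2) :
    Hmap n (a + b) = Hmap n a + Hmap n b := by
  funext i j
  simp only [Hmap, Pi.add_apply]
  split_ifs <;> simp

lemma Hmap_smul (n : ℕ) (c : ZMod 2) (a : ℕ → ℕ → ZMod 2) :
    Hmap n (c • a) = c • Hmap n a := by
  funext i j
  simp only [Hmap, Pi.smul_apply]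
  split_ifs <;> simp

/-- the linear map `H : DST n → DST (n-3)` -/
def Hl (n : ℕ) : (DST n) →ₗ[ZMod 2] (DST (n-3)) where
  toFun a := ⟨Hmap n a, Hmap_mem_DST a.2⟩
  map_add' := by intro x y; apply Subtype.ext; exact Hmap_add n x y
  map_smul' := by intro c x; apply Subtype.ext; exact Hmap_smul n c x

lemma ker_Hl {n : ℕ} (hn : 3 ≤ n) :
    LinearMap.ker (Hl n) = Submodule.span (ZMod 2)
      {(⟨Bt n, Bt_mem_DST hn⟩ : DST n)} := by
  apply le_antisymm
  · intro x hx
    have hx0 : Hmap n (x : ℕ → ℕ → ZMod 2) = 0 := by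
      have := congrArg Subtype.val (LinearMap.mem_ker.1 hx)
      exact this
    have hxB := ker_Hmap hn x.2 hx0
    rw [Submodule.mem_span_singleton]
    exact ⟨(x : ℕ → ℕ → ZMod 2) 1 2, Subtype.ext hxB.symm⟩
  · rw [Submodule.span_le, Set.singleton_subset_iff]
    show Hl n _ = 0
    apply Subtype.ext
    exact Hmap_Bt

lemma range_Hl {n : ℕ} (hn : 3 ≤ n) :
    LinearMap.range (Hl n) = LinearMap.ker (sig (n-3)) := by
  apply le_antisymm
  · rintro y ⟨x, rfl⟩
    exact Hmap_sigma x.2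
  · intro y hy
    obtain ⟨a, haDST, hH⟩ := surj_aux hn y.2 (LinearMap.mem_ker.1 hy)
    exact ⟨⟨a, haDST⟩, Subtype.ext hH⟩

/-- witness with odd row sum, m odd -/
lemma sigma_witness {m : ℕ} (hm : m % 2 = 1) :
    ∃ w : DST m, sig m w = 1 := by
  rcases Nat.lt_or_ge m 3 with h3 | h3
  · -- m = 1
    have hm1 : m = 1 := by omega
    subst hm1
    set E : ℕ → ℕ → ZMod 2 := fun i j => if i = 1 ∧ j = 1 then 1 else 0 with hE
    have hEST : E ∈ ST 1 := by
      constructor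
      · intro i j h
        simp only [hE]
        rw [if_neg]
        intro ⟨hi, hj⟩
        exact h ⟨by omega, by omega, by omega⟩
      · intro i j h2 hij hjn; omega
    have hEDST : E ∈ DST 1 := by
      refine ⟨hEST, ?_, ?_⟩
      · rw [rot_eq_iff hEST]
        intro j h1 hj
        have : j = 1 := by omega
        rw [this]
      · rw [hrefl_eq_iff hEST]
        intro j h1 hj
        have : j = 1 := by omega
        rw [this]
    refine ⟨⟨E, hEDST⟩, ?_⟩
    show ∑ j ∈ Icc 1 1, E 1 j = 1
    simp [hE]
  · refine ⟨⟨Bt m, Bt_mem_DST h3⟩, ?_⟩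
    show ∑ j ∈ Icc 1 m, Bt m 1 j = 1
    have he : ∀ j ∈ Icc 1 m, Bt m 1 j = if j ∈ Icc 2 (m-1) then 1 else 0 := by
      intro j hj
      simp only [Finset.mem_Icc] at hj ⊢
      simp only [Bt, InTri]
      split_ifs with hc hd hd <;>
        first
        | rfl
        | (exfalso
           simp only [true_and, and_true, true_or, or_true, le_refl] at *
           omega)
    rw [Finset.sum_congr rfl he, Finset.sum_ite_mem]
    have hint : Icc 1 m ∩ Icc 2 (m-1) = Icc 2 (m-1) := by
      ext x; simp only [Finset.mem_inter, Finset.mem_Icc]; omega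
    rw [hint, Finset.sum_const, Nat.card_Icc]
    have e : m - 1 + 1 - 2 = m - 2 := by omega
    rw [e]
    obtain ⟨t, ht⟩ : ∃ t, m = 2*t+3 := ⟨(m-3)/2, by omega⟩
    have e2 : m - 2 = 2*t+1 := by omega
    rw [e2, nsmul_eq_mul, mul_one]
    show ((2*t+1 : ℕ) : ZMod 2) = 1
    push_cast
    rw [show ((2:ZMod 2)) = 0 from rfl]
    ring

/-- all first-row sums vanish on DST m for even m -/
lemma sigma_zero {m : ℕ} (hm : m % 2 = 0) (y : DST m) : sig m y = 0 := by
  obtain ⟨yst, yr, yh⟩ := y.2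
  show ∑ j ∈ Icc 1 m, (y : ℕ → ℕ → ZMod 2) 1 j = 0
  exact SIL_aux (fun x z h => row_symm yst yh h)
    (fun c hc => absurd hc (by omega)) (m+2) 1 m (by omega) (by omega)

set_option maxHeartbeats 1000000 in
set_option synthInstance.maxHeartbeats 400000 in
lemma rec_step {n : ℕ} (hn : 3 ≤ n) :
    Module.finrank (ZMod 2) (DST n) + (if (n-3) % 2 = 1 then 1 else 0)
      = 1 + Module.finrank (ZMod 2) (DST (n-3)) := by
  have hrn := LinearMap.finrank_range_add_finrank_ker (Hl n)
  have hker : Module.finrank (ZMod 2) (LinearMap.ker (Hl n)) = 1 := by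
    rw [ker_Hl hn]
    apply finrank_span_singleton
    intro h
    exact Bt_ne_zero hn (congrArg Subtype.val h)
  have hrange : Module.finrank (ZMod 2) (LinearMap.range (Hl n))
      = Module.finrank (ZMod 2) (LinearMap.ker (sig (n-3))) := by
    rw [range_Hl hn]
  have hsn := LinearMap.finrank_range_add_finrank_ker (sig (n-3))
  by_cases hpar : (n-3) % 2 = 1
  · have hsurj : LinearMap.range (sig (n-3)) = ⊤ := by
      obtain ⟨w, hw⟩ := sigma_witness hpar
      rw [eq_top_iff]
      intro x _
      have : x = x • sig (n-3) w := by rw [hw]; simp [smul_eq_mul]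
      rw [this, ← LinearMap.map_smul]
      exact LinearMap.mem_range_self _ _
    rw [hsurj, finrank_top, Module.finrank_self] at hsn
    rw [if_pos hpar]
    omega
  · have hz : LinearMap.ker (sig (n-3)) = ⊤ := by
      rw [eq_top_iff]
      intro y _
      exact sigma_zero (by omega) y
    rw [hz, finrank_top] at hrange
    rw [if_neg hpar]
    omega

end Steinhaus

namespace Steinhaus

lemma DST_zero_bot : DST 0 = ⊥ := by
  rw [Submodule.eq_bot_iff]
  intro a ha
  exact ST_eq_zero ha.1 (fun j => ST_vanish ha.1 (by simp [InTri]; omega))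

lemma DST_two_bot : DST 2 = ⊥ := by
  rw [Submodule.eq_bot_iff]
  intro a ha
  obtain ⟨hst, hr, hh⟩ := ha
  have h12 : a 1 2 = a 1 1 := by
    have := rot_col hr (j := 1) (by omega) (by omega)
    exact this
  have h22 : a 2 2 = a 1 2 := rot_col hr (j := 2) (by omega) (by omega)
  have hrule := ST_rule hst (i := 2) (j := 2) (by omega) (by omega) (by omega)
  have e : (2:ℕ) - 1 = 1 := rfl
  rw [e] at hrule
  -- a 2 2 = a 1 1 + a 1 2
  have h120 : a 1 2 = 0 := by
    rw [hrule, ← h12] at h22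
    -- h22 : a 1 2 + a 1 2 = a 1 2
    rw [← h22]
    exact z2 _
  have h110 : a 1 1 = 0 := by rw [← h12, h120]
  apply ST_eq_zero hst
  intro j
  rcases Nat.lt_or_ge j 1 with h | h
  · exact ST_vanish hst (by simp [InTri]; omega)
  · rcases Nat.lt_or_ge j 2 with h' | h'
    · have : j = 1 := by omega
      rw [this, h110]
    · rcases Nat.lt_or_ge j 3 with h'' | h''
      · have : j = 2 := by omega
        rw [this, h120]
      · exact ST_vanish hst (by simp [InTri]; omega)

def Eone : ℕ → ℕ → ZMod 2 := fun i j => if i = 1 ∧ j = 1 then 1 else 0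

lemma Eone_mem_ST : Eone ∈ ST 1 := by
  constructor
  · intro i j h
    simp only [Eone]
    rw [if_neg]
    intro ⟨hi, hj⟩
    exact h ⟨by omega, by omega, by omega⟩
  · intro i j h2 hij hjn; omega

lemma Eone_mem_DST : Eone ∈ DST 1 := by
  refine ⟨Eone_mem_ST, ?_, ?_⟩
  · rw [rot_eq_iff Eone_mem_ST]
    intro j h1 hj
    have : j = 1 := by omega
    rw [this]
  · rw [hrefl_eq_iff Eone_mem_ST]
    intro j h1 hj
    have : j = 1 := by omega
    rw [this]

lemma DST_one : DST 1 = Submodule.span (ZMod 2) {Eone} := by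
  apply le_antisymm
  · intro a ha
    rw [Submodule.mem_span_singleton]
    refine ⟨a 1 1, ?_⟩
    apply ST_ext (Submodule.smul_mem _ _ Eone_mem_ST) ha.1
    intro j h1 hj
    have : j = 1 := by omega
    rw [this]
    show a 1 1 * Eone 1 1 = a 1 1
    simp [Eone]
  · rw [Submodule.span_le, Set.singleton_subset_iff]
    exact Eone_mem_DST

lemma dim0 : Module.finrank (ZMod 2) (DST 0) = 0 := by
  rw [DST_zero_bot]; exact finrank_bot _ _

lemma dim2 : Module.finrank (ZMod 2) (DST 2) = 0 := by
  rw [DST_two_bot]; exact finrank_bot _ _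

lemma dim1 : Module.finrank (ZMod 2) (DST 1) = 1 := by
  rw [DST_one]
  apply finrank_span_singleton
  intro h
  have h2 := congrFun (congrFun h 1) 1
  simp only [Eone, Pi.zero_apply] at h2
  rw [if_pos ⟨trivial, trivial⟩] at h2
  exact one_ne_zero h2

theorem statement15' (n : ℕ) :
    Module.finrank (ZMod 2) (DST n) = (n + 3) / 6 + (if n % 6 = 1 then 1 else 0) := by
  induction n using Nat.strong_induction_on with
  | _ n ih =>
    match n with
    | 0 => rw [dim0]; rfl
    | 1 => rw [dim1]; rfl
    | 2 => rw [dim2]; rfl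
    | (k+3) =>
      have hrec := rec_step (n := k+3) (by omega)
      have e : k + 3 - 3 = k := by omega
      rw [e] at hrec
      have hk := ih k (by omega)
      rw [hk] at hrec
      by_cases h1 : k % 2 = 1 <;> by_cases h2 : k % 6 = 1 <;>
        by_cases h3 : (k+3) % 6 = 1 <;>
        simp only [h1, h2, h3, if_true, if_false] at hrec ⊢ <;> omega

end Steinhaus

namespace Steinhaus

/-- Corollary 15. `dim DST(n) = ⌊(n+3)/6⌋ + δ_{1,(n mod 6)}`. -/
theorem statement15 (n : ℕ) :
    Module.finrank (ZMod 2) (DST n) = (n + 3) / 6 + (if n % 6 = 1 then 1 else 0) := by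
  exact statement15' n

end Steinhaus
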